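/- Let V be a finite-dimensional real vector space, Q a quadratic form on V, and M a finite-dimensional simple Cℓ(Q)-module (i.e. M ≠ 0 and its only Cℓ(Q)-submodules are 0 and M). Let h be a nondegenerate bilinear form on M that is symmetric or skew-symmetric, and let S₀ ⊆ M be a maximally isotropic subspace, i.e. S₀ = S₀^⊥ := {t ∈ M : h(s,t) = 0 for all s ∈ S₀}. Then there exist v ∈ V and s, t ∈ S₀ with h(γ_v s, t) ≠ 0. (This is the final claim of the Proposition in Section 2: if S₀ is maximally isotropic then the bracket [S₀,S₀]₁ is nonzero, because γ_v S₀ ⊆ S₀ for all v is impossible when M is an irreducible Clifford module.) -/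

import Mathlib

/-- The Clifford multiplication `γ_v : s ↦ ι(v) • s` as an `ℝ`-linear endomorphism
of a `Cℓ(Q)`-module `M`. -/
noncomputable def gammaLin {V : Type*} [AddCommGroup V] [Module ℝ V]
    (Q : QuadraticForm ℝ V) {M : Type*} [AddCommGroup M] [Module ℝ M]
    [Module (CliffordAlgebra Q) M] [IsScalarTower ℝ (CliffordAlgebra Q) M]
    (v : V) : M →ₗ[ℝ] M where
  toFun s := CliffordAlgebra.ι Q v • s
  map_add' s t := smul_add _ s t
  map_smul' r s := (smul_comm r (CliffordAlgebra.ι Q v) s).symm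

/-- If `M` is a simple Clifford module, `h` a nondegenerate symmetric or skew-symmetric
bilinear form on `M`, and `S₀` a maximally isotropic subspace (`S₀ = S₀^⊥`), then
there are `v ∈ V` and `s, t ∈ S₀` with `h(γ_v s, t) ≠ 0`. -/
theorem bracket_nonzero_of_maximally_isotropic
    {V : Type*} [AddCommGroup V] [Module ℝ V] [FiniteDimensional ℝ V]
    (Q : QuadraticForm ℝ V)
    {M : Type*} [AddCommGroup M] [Module ℝ M] [FiniteDimensional ℝ M]
    [Module (CliffordAlgebra Q) M] [IsScalarTower ℝ (CliffordAlgebra Q) M]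
    [IsSimpleModule (CliffordAlgebra Q) M]
    (h : LinearMap.BilinForm ℝ M) (hh : h.Nondegenerate)
    (hsym : (∀ s t : M, h s t = h t s) ∨ (∀ s t : M, h s t = - h t s))
    (S₀ : Submodule ℝ M)
    (hmax : ∀ t : M, t ∈ S₀ ↔ ∀ s ∈ S₀, h s t = 0) :
    ∃ (v : V) (s t : M), s ∈ S₀ ∧ t ∈ S₀ ∧ h (gammaLin Q v s) t ≠ 0 := by
  by_contra hcon
  push_neg at hcon
  -- From hcon: γ_v s ∈ S₀ for all v and s ∈ S₀
  have hclosed : ∀ (v : V) (s : M), s ∈ S₀ → CliffordAlgebra.ι Q v • s ∈ S₀ := by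
    intro v s hs
    rw [hmax]
    intro t ht
    have h1 : h (CliffordAlgebra.ι Q v • s) t = 0 := hcon v s t hs ht
    rcases hsym with hsym | hsym
    · rw [hsym]; exact h1
    · rw [hsym, h1, neg_zero]
  -- S₀ is a Clifford submodule
  have hsmul : ∀ (a : CliffordAlgebra Q) (s : M), s ∈ S₀ → a • s ∈ S₀ := by
    intro a
    induction a using CliffordAlgebra.induction with
    | algebraMap r =>
        intro s hs
        rw [algebraMap_smul]
        exact S₀.smul_mem r hs
    | ι v => exact hclosed v
    | mul a b ha hb =>
        intro s hs
        rw [mul_smul]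
        exact ha _ (hb _ hs)
    | add a b ha hb =>
        intro s hs
        rw [add_smul]
        exact S₀.add_mem (ha _ hs) (hb _ hs)
  let S' : Submodule (CliffordAlgebra Q) M :=
    { carrier := S₀
      add_mem' := fun ha hb => S₀.add_mem ha hb
      zero_mem' := S₀.zero_mem
      smul_mem' := fun a s hs => hsmul a s hs }
  haveI : Nontrivial M := IsSimpleModule.nontrivial (CliffordAlgebra Q) M
  rcases eq_bot_or_eq_top S' with hb | ht
  · -- S₀ = ⊥, but then hmax puts everything in S₀, so M = 0
    obtain ⟨m, hm⟩ := exists_ne (0 : M)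
    have hmem : m ∈ S₀ := by
      rw [hmax]
      intro s hs
      have : s ∈ S' := hs
      rw [hb] at this
      simp only [Submodule.mem_bot] at this
      rw [this, map_zero, LinearMap.zero_apply]
    have : m ∈ S' := hmem
    rw [hb] at this
    simp only [Submodule.mem_bot] at this
    exact hm this
  · -- S₀ = ⊤, so h ≡ 0, contradicting nondegeneracy
    obtain ⟨m, hm⟩ := exists_ne (0 : M)
    apply hm
    apply hh.1
    intro t
    have : t ∈ S₀ := by
      have : t ∈ S' := by rw [ht]; trivial
      exact this
    have hm' : m ∈ S' := by rw [ht]; trivial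
    exact (hmax t).mp this m hm'
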